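/- Let a ≠ 0, b ∈ ℝ, θ ∈ ℝ, and let Λ ⊆ aℤ + b. Define F(z) = c·exp(πbi/a)·exp(−(π e^{−iθ}/a) z) + c'·exp(−πbi/a)·exp((π e^{−iθ}/a) z) and H(z) = c̄·exp(πbi/a)·exp(−(π e^{−iθ}/a) z) + c̄'·exp(−πbi/a)·exp((π e^{−iθ}/a) z) for constants c, c' ∈ ℂ. Then |F(z)| = |H(z)| for every z ∈ e^{iθ}(ℝ + iΛ). -/

import Mathlib

theorem counterexample_equal_modulus (a b θ : ℝ) (ha : a ≠ 0) (Λ : Set ℝ)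
    (hΛ : Λ ⊆ {r : ℝ | ∃ n : ℤ, r = a * n + b}) (c c' : ℂ) (F H : ℂ → ℂ)
    (hF : ∀ z : ℂ, F z =
      c * Complex.exp ((Real.pi : ℂ) * b * Complex.I / a) *
        Complex.exp (-((Real.pi : ℂ) * Complex.exp (-Complex.I * θ) / a) * z) +
      c' * Complex.exp (-((Real.pi : ℂ) * b * Complex.I / a)) *
        Complex.exp (((Real.pi : ℂ) * Complex.exp (-Complex.I * θ) / a) * z))
    (hH : ∀ z : ℂ, H z =
      (starRingEnd ℂ) c * Complex.exp ((Real.pi : ℂ) * b * Complex.I / a) *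
        Complex.exp (-((Real.pi : ℂ) * Complex.exp (-Complex.I * θ) / a) * z) +
      (starRingEnd ℂ) c' * Complex.exp (-((Real.pi : ℂ) * b * Complex.I / a)) *
        Complex.exp (((Real.pi : ℂ) * Complex.exp (-Complex.I * θ) / a) * z)) :
    ∀ (t : ℝ), ∀ l ∈ Λ,
      ‖F (Complex.exp (Complex.I * θ) * ((t : ℂ) + Complex.I * l))‖
        = ‖H (Complex.exp (Complex.I * θ) * ((t : ℂ) + Complex.I * l))‖ := by
  intro t l hl
  obtain ⟨n, hn⟩ := hΛ hl
  set z : ℂ := Complex.exp (Complex.I * θ) * ((t : ℂ) + Complex.I * l) with hz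
  have ha' : (a : ℂ) ≠ 0 := by exact_mod_cast ha
  have key : Complex.exp (-Complex.I * θ) * Complex.exp (Complex.I * θ) = 1 := by
    rw [← Complex.exp_add]
    ring_nf
    exact Complex.exp_zero
  have hl' : (l : ℂ) = a * n + b := by exact_mod_cast hn
  have e1 : -((Real.pi : ℂ) * Complex.exp (-Complex.I * θ) / a) * z
      = -((Real.pi : ℂ) / a) * ((t : ℂ) + Complex.I * l) := by
    rw [hz]
    linear_combination (-((Real.pi : ℂ) / a) * ((t : ℂ) + Complex.I * l)) * key
  have A1 : (Real.pi : ℂ) * b * Complex.I / a +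
      (-((Real.pi : ℂ) / a) * ((t : ℂ) + Complex.I * l))
      = -((Real.pi : ℂ) * t / a) - (Real.pi : ℂ) * n * Complex.I := by
    rw [hl']
    field_simp
    ring
  have hexp1 : Complex.exp ((Real.pi : ℂ) * b * Complex.I / a) *
      Complex.exp (-((Real.pi : ℂ) * Complex.exp (-Complex.I * θ) / a) * z)
      = Complex.exp (-((Real.pi : ℂ) * t / a) - (Real.pi : ℂ) * n * Complex.I) := by
    rw [e1, ← Complex.exp_add, A1]
  have hexp2 : Complex.exp (-((Real.pi : ℂ) * b * Complex.I / a)) *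
      Complex.exp (((Real.pi : ℂ) * Complex.exp (-Complex.I * θ) / a) * z)
      = Complex.exp ((Real.pi : ℂ) * t / a + (Real.pi : ℂ) * n * Complex.I) := by
    have e2 : ((Real.pi : ℂ) * Complex.exp (-Complex.I * θ) / a) * z
        = ((Real.pi : ℂ) / a) * ((t : ℂ) + Complex.I * l) := by
      rw [hz]
      linear_combination (((Real.pi : ℂ) / a) * ((t : ℂ) + Complex.I * l)) * key
    rw [e2, ← Complex.exp_add]
    congr 1
    rw [hl']
    field_simp
    ring
  have hper : Complex.exp ((2 * Real.pi : ℝ) * n * Complex.I) = 1 := by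
    have := Complex.exp_int_mul_two_pi_mul_I n
    convert this using 2
    push_cast
    ring
  have hconj1 : Complex.exp (-((Real.pi : ℂ) * t / a) + (Real.pi : ℂ) * n * Complex.I)
      = Complex.exp (-((Real.pi : ℂ) * t / a) - (Real.pi : ℂ) * n * Complex.I) := by
    rw [show -((Real.pi : ℂ) * t / a) + (Real.pi : ℂ) * n * Complex.I
        = (-((Real.pi : ℂ) * t / a) - (Real.pi : ℂ) * n * Complex.I)
          + ((2 * Real.pi : ℝ) * n * Complex.I) by push_cast; ring,
      Complex.exp_add, hper, mul_one]
  have hconj2 : Complex.exp ((Real.pi : ℂ) * t / a - (Real.pi : ℂ) * n * Complex.I)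
      = Complex.exp ((Real.pi : ℂ) * t / a + (Real.pi : ℂ) * n * Complex.I) := by
    rw [show (Real.pi : ℂ) * t / a + (Real.pi : ℂ) * n * Complex.I
        = ((Real.pi : ℂ) * t / a - (Real.pi : ℂ) * n * Complex.I)
          + ((2 * Real.pi : ℝ) * n * Complex.I) by push_cast; ring,
      Complex.exp_add, hper, mul_one]
  have hHF : H z = (starRingEnd ℂ) (F z) := by
    rw [hF, hH, mul_assoc c, mul_assoc c', mul_assoc ((starRingEnd ℂ) c),
      mul_assoc ((starRingEnd ℂ) c'), hexp1, hexp2, map_add, map_mul, map_mul,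
      ← Complex.exp_conj, ← Complex.exp_conj]
    have cA : (starRingEnd ℂ) (-((Real.pi : ℂ) * t / a) - (Real.pi : ℂ) * n * Complex.I)
        = -((Real.pi : ℂ) * t / a) + (Real.pi : ℂ) * n * Complex.I := by
      simp [Complex.conj_I]
    have cB : (starRingEnd ℂ) ((Real.pi : ℂ) * t / a + (Real.pi : ℂ) * n * Complex.I)
        = (Real.pi : ℂ) * t / a - (Real.pi : ℂ) * n * Complex.I := by
      simp [Complex.conj_I]
      ring
    rw [cA, cB, hconj1, hconj2]
  rw [hHF, Complex.norm_conj]
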